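/- arXiv:1711.01755 — 2 statements merged into one kernel-verified Lean document; each statement's English description precedes it below -/
import Mathlib

section
/- Let α > 0 and let y : ℝ² → ℝ be twice continuously differentiable and satisfy the wave equation ∂²y/∂t² = α² ∂²y/∂x² at every point of ℝ². Then there exist twice differentiable functions f, g : ℝ → ℝ such that y(x,t) = f(x + α·t) + g(x − α·t) for all (x,t) ∈ ℝ². -/
open scoped Topology

/-- Derivative of a directional partial of a `C²`-ish function along a curve. -/
private lemma aux_hasDerivAt_fderiv_along {Y : ℝ × ℝ → ℝ}
    (hd : Differentiable ℝ (fderiv ℝ Y)) (u : ℝ × ℝ) {c : ℝ → ℝ × ℝ} {c' : ℝ × ℝ} {s : ℝ}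
    (hc : HasDerivAt c c' s) :
    HasDerivAt (fun r => fderiv ℝ Y (c r) u) (fderiv ℝ (fderiv ℝ Y) (c s) c' u) s := by
  have h1 : HasDerivAt (fun r => fderiv ℝ Y (c r)) (fderiv ℝ (fderiv ℝ Y) (c s) c') s :=
    (hd (c s)).hasFDerivAt.comp_hasDerivAt s hc
  simpa using h1.clm_apply (hasDerivAt_const s u)

theorem wave_equation_general_solution (α : ℝ) (hα : 0 < α) (y : ℝ → ℝ → ℝ)
    (hy : ContDiff ℝ 2 (fun p : ℝ × ℝ => y p.1 p.2))
    (hwave : ∀ x t : ℝ,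
      deriv (deriv (fun t' : ℝ => y x t')) t =
        α ^ 2 * deriv (deriv (fun x' : ℝ => y x' t)) x) :
    ∃ f g : ℝ → ℝ, Differentiable ℝ f ∧ Differentiable ℝ (deriv f) ∧
      Differentiable ℝ g ∧ Differentiable ℝ (deriv g) ∧
      ∀ x t : ℝ, y x t = f (x + α * t) + g (x - α * t) := by
  set Y : ℝ × ℝ → ℝ := fun p => y p.1 p.2 with hYdef
  have hYd : Differentiable ℝ Y := hy.differentiable (by norm_num)
  have hY1 : ContDiff ℝ 1 (fderiv ℝ Y) := hy.fderiv_right (le_refl 2)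
  have hYd' : Differentiable ℝ (fderiv ℝ Y) := hY1.differentiable one_ne_zero
  set H : ℝ × ℝ → (ℝ × ℝ) →L[ℝ] (ℝ × ℝ) →L[ℝ] ℝ := fderiv ℝ (fderiv ℝ Y) with hHdef
  -- curves
  have curveT : ∀ x t : ℝ, HasDerivAt (fun t' : ℝ => ((x, t') : ℝ × ℝ)) ((0, 1) : ℝ × ℝ) t :=
    fun x t => (hasDerivAt_const t x).prodMk (hasDerivAt_id t)
  have curveX : ∀ x t : ℝ, HasDerivAt (fun x' : ℝ => ((x', t) : ℝ × ℝ)) ((1, 0) : ℝ × ℝ) x :=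
    fun x t => (hasDerivAt_id x).prodMk (hasDerivAt_const x t)
  -- first partials
  have keyT : ∀ x t : ℝ, HasDerivAt (fun t' => y x t') (fderiv ℝ Y (x, t) (0, 1)) t := by
    intro x t
    exact (hYd (x, t)).hasFDerivAt.comp_hasDerivAt t (curveT x t)
  have keyX : ∀ x t : ℝ, HasDerivAt (fun x' => y x' t) (fderiv ℝ Y (x, t) (1, 0)) x := by
    intro x t
    exact (hYd (x, t)).hasFDerivAt.comp_hasDerivAt x (curveX x t)
  -- wave equation in fderiv form
  have hwave' : ∀ p : ℝ × ℝ, H p (0, 1) (0, 1) = α ^ 2 * H p (1, 0) (1, 0) := by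
    rintro ⟨x, t⟩
    have e1 : deriv (deriv (fun t' : ℝ => y x t')) t = H (x, t) (0, 1) (0, 1) := by
      have hfun : deriv (fun t' : ℝ => y x t') = fun t' => fderiv ℝ Y (x, t') (0, 1) :=
        funext fun t' => (keyT x t').deriv
      rw [hfun]
      exact (aux_hasDerivAt_fderiv_along hYd' (0, 1) (curveT x t)).deriv
    have e2 : deriv (deriv (fun x' : ℝ => y x' t)) x = H (x, t) (1, 0) (1, 0) := by
      have hfun : deriv (fun x' : ℝ => y x' t) = fun x' => fderiv ℝ Y (x', t) (1, 0) :=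
        funext fun x' => (keyX x' t).deriv
      rw [hfun]
      exact (aux_hasDerivAt_fderiv_along hYd' (1, 0) (curveX x t)).deriv
    rw [← e1, ← e2]
    exact hwave x t
  -- symmetry of second derivative
  have hsymm : ∀ (p : ℝ × ℝ) (u v : ℝ × ℝ), H p u v = H p v u := by
    intro p u v
    exact second_derivative_symmetric (fun q => (hYd q).hasFDerivAt)
      (hYd' p).hasFDerivAt u v
  -- the function v = ∂_t y + α ∂_x y
  set v : ℝ × ℝ → ℝ := fun p => fderiv ℝ Y p (0, 1) + α * fderiv ℝ Y p (1, 0) with hvdef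
  have hvdiff : Differentiable ℝ v :=
    (hYd'.clm_apply (differentiable_const _)).add
      ((hYd'.clm_apply (differentiable_const _)).const_mul α)
  have hvcont : Continuous v := hvdiff.continuous
  -- expansion of H p (a, b) applied to u
  have Hexp : ∀ (p : ℝ × ℝ) (a b : ℝ) (u : ℝ × ℝ),
      H p (a, b) u = a * H p (1, 0) u + b * H p (0, 1) u := by
    intro p a b u
    have : ((a, b) : ℝ × ℝ) = a • ((1, 0) : ℝ × ℝ) + b • ((0, 1) : ℝ × ℝ) := by
      simp [Prod.ext_iff]
    rw [this, map_add, map_smul, map_smul]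
    simp
  -- transport: v (x, t) = v (x + α t, 0)
  have transport : ∀ x t : ℝ, v (x, t) = v (x + α * t, 0) := by
    intro x t
    set φ : ℝ → ℝ := fun s => v (x + α * s, t - s) with hφdef
    have hc : ∀ s : ℝ, HasDerivAt (fun s' : ℝ => ((x + α * s', t - s') : ℝ × ℝ))
        ((α, -1) : ℝ × ℝ) s := by
      intro s
      simpa using (((hasDerivAt_id s).const_mul α).const_add x).prodMk
        ((hasDerivAt_id s).const_sub t)
    have hφ' : ∀ s : ℝ, HasDerivAt φ 0 s := by
      intro s
      have h1 := aux_hasDerivAt_fderiv_along hYd' (0, 1) (hc s)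
      have h2 := aux_hasDerivAt_fderiv_along hYd' (1, 0) (hc s)
      have := h1.add (h2.const_mul α)
      have key : H (x + α * s, t - s) (α, -1) (0, 1)
          + α * H (x + α * s, t - s) (α, -1) (1, 0) = 0 := by
        have k1 := Hexp (x + α * s, t - s) α (-1) (0, 1)
        have k2 := Hexp (x + α * s, t - s) α (-1) (1, 0)
        have k3 := hwave' (x + α * s, t - s)
        have k4 := hsymm (x + α * s, t - s) (1, 0) (0, 1)
        rw [k1, k2, k3, k4]; ring
      rw [key] at this
      exact this
    have hconst : φ t = φ 0 :=
      is_const_of_deriv_eq_zero (fun s => (hφ' s).differentiableAt)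
        (fun s => (hφ' s).deriv) t 0
    simpa [hφdef] using hconst.symm
  -- V and its antiderivative F
  set V : ℝ → ℝ := fun s => v (s, 0) with hVdef
  have hVcont : Continuous V := hvcont.comp (continuous_id.prodMk continuous_const)
  have hVdiff : Differentiable ℝ V :=
    hvdiff.comp (differentiable_id.prodMk (differentiable_const 0))
  set F : ℝ → ℝ := fun s => (2 * α)⁻¹ * ∫ σ in (0:ℝ)..s, V σ with hFdef
  have hF' : ∀ s : ℝ, HasDerivAt F ((2 * α)⁻¹ * V s) s := by
    intro s
    exact ((hVcont.integral_hasStrictDerivAt 0 s).hasDerivAt).const_mul ((2 * α)⁻¹)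
  have hFderiv : deriv F = fun s => (2 * α)⁻¹ * V s := funext fun s => (hF' s).deriv
  -- define g
  set g : ℝ → ℝ := fun s => y s 0 - F s with hgdef
  have hg' : ∀ s : ℝ, HasDerivAt g (fderiv ℝ Y (s, 0) (1, 0) - (2 * α)⁻¹ * V s) s := by
    intro s
    exact (keyX s 0).sub (hF' s)
  refine ⟨F, g, ?_, ?_, ?_, ?_, ?_⟩
  · exact fun s => ((hF' s).differentiableAt)
  · rw [hFderiv]; exact hVdiff.const_mul _
  · exact fun s => (hg' s).differentiableAt
  · have : deriv g = fun s => fderiv ℝ Y (s, 0) (1, 0) - (2 * α)⁻¹ * V s :=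
      funext fun s => (hg' s).deriv
    rw [this]
    exact ((hYd'.comp (differentiable_id.prodMk (differentiable_const 0))).clm_apply
      (differentiable_const _)).sub (hVdiff.const_mul _)
  · -- main identity
    intro x t
    set χ : ℝ → ℝ := fun s => Y (x - α * t + α * s, s) - F (x - α * t + 2 * α * s) with hχdef
    have hχ' : ∀ s : ℝ, HasDerivAt χ 0 s := by
      intro s
      have hc : HasDerivAt (fun s' : ℝ => ((x - α * t + α * s', s') : ℝ × ℝ))
          ((α, 1) : ℝ × ℝ) s :=
        by simpa using (((hasDerivAt_id s).const_mul α).const_add (x - α * t)).prodMk (hasDerivAt_id s)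
      have h1 : HasDerivAt (fun s' => Y (x - α * t + α * s', s'))
          (fderiv ℝ Y (x - α * t + α * s, s) (α, 1)) s :=
        (hYd _).hasFDerivAt.comp_hasDerivAt s hc
      have hline : HasDerivAt (fun s' : ℝ => x - α * t + 2 * α * s') (2 * α) s := by
        simpa using ((hasDerivAt_id s).const_mul (2 * α)).const_add (x - α * t)
      have h2 : HasDerivAt (fun s' => F (x - α * t + 2 * α * s'))
          ((2 * α)⁻¹ * V (x - α * t + 2 * α * s) * (2 * α)) s :=
        (hF' (x - α * t + 2 * α * s)).comp (h₂ := F) (h := fun s' : ℝ => x - α * t + 2 * α * s') s hline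
      have hval : fderiv ℝ Y (x - α * t + α * s, s) (α, 1)
          - (2 * α)⁻¹ * V (x - α * t + 2 * α * s) * (2 * α) = 0 := by
        have expand : ((α, 1) : ℝ × ℝ) = α • ((1, 0) : ℝ × ℝ) + ((0, 1) : ℝ × ℝ) := by
          simp [Prod.ext_iff]
        have e1 : fderiv ℝ Y (x - α * t + α * s, s) (α, 1)
            = v (x - α * t + α * s, s) := by
          rw [expand, map_add, map_smul, hvdef]
          simp [mul_comm]
          ring
        have e2 : v (x - α * t + α * s, s) = V (x - α * t + 2 * α * s) := by
          rw [hVdef]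
          have := transport (x - α * t + α * s) s
          rw [this]
          ring_nf
        rw [e1, e2]
        field_simp
        ring
      have := h1.sub h2
      rw [hval] at this
      exact this
    have hconst : χ t = χ 0 :=
      is_const_of_deriv_eq_zero (fun s => (hχ' s).differentiableAt)
        (fun s => (hχ' s).deriv) t 0
    have hχt : χ t = y x t - F (x + α * t) := by
      show Y (x - α * t + α * t, t) - F (x - α * t + 2 * α * t) = _
      rw [show x - α * t + α * t = x by ring, show x - α * t + 2 * α * t = x + α * t by ring]
    have hχ0 : χ 0 = g (x - α * t) := by
      show Y (x - α * t + α * 0, 0) - F (x - α * t + 2 * α * 0) = _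
      rw [show x - α * t + α * 0 = x - α * t by ring, show x - α * t + 2 * α * 0 = x - α * t by ring]
    have := hχt.symm.trans (hconst.trans hχ0)
    linarith [this]
end

section
/- Let B ⊆ ℝ² be an open disc (a metric ball) and let u : ℝ² → ℝ be harmonic on B, i.e. twice continuously differentiable on B with ∂²u/∂x² + ∂²u/∂y² = 0 on B. Then there exists a function f : ℂ → ℂ that is complex differentiable at every point of the corresponding open disc {x + i·y : (x,y) ∈ B} ⊆ ℂ and satisfies Re f(x + i·y) = u(x,y) for all (x,y) ∈ B. -/
open Complex Metric
open scoped ENNReal NNReal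

lemma hasFDerivAt_of_restrictScalars' {f : ℂ → ℂ} {L : ℂ →L[ℂ] ℂ} {z : ℂ}
    (h : HasFDerivAt f (L.restrictScalars ℝ) z) : HasFDerivAt f L z := by
  rw [hasFDerivAt_iff_isLittleO_nhds_zero] at h ⊢
  simpa using h

lemma clm_ext_prod {F : Type*} [NormedAddCommGroup F] [NormedSpace ℝ F]
    {L M : ℝ × ℝ →L[ℝ] F} (h1 : L (1, 0) = M (1, 0)) (h2 : L (0, 1) = M (0, 1)) : L = M := by
  apply ContinuousLinearMap.ext; intro v
  have hv : v = v.1 • ((1:ℝ), (0:ℝ)) + v.2 • ((0:ℝ), (1:ℝ)) := by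
    apply Prod.ext <;> simp
  rw [hv, map_add, map_add, map_smul, map_smul, map_smul, map_smul, h1, h2]

lemma clm_ext_cplx {F : Type*} [NormedAddCommGroup F] [NormedSpace ℝ F]
    {L M : ℂ →L[ℝ] F} (h1 : L 1 = M 1) (h2 : L I = M I) : L = M := by
  apply ContinuousLinearMap.ext; intro v
  have hv : v = v.re • (1:ℂ) + v.im • I := by
    rw [Complex.real_smul, Complex.real_smul, mul_one, Complex.re_add_im]
  rw [hv, map_add, map_add, map_smul, map_smul, map_smul, map_smul, h1, h2]

lemma exists_primitive {g : ℂ → ℂ} {z₀ : ℂ} {r : ℝ} (hr : 0 < r)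
    (hg : DifferentiableOn ℂ g (ball z₀ r)) :
    ∃ F : ℂ → ℂ, ∀ z ∈ ball z₀ r, HasDerivAt F (g z) z := by
  set p : FormalMultilinearSeries ℂ ℂ ℂ := cauchyPowerSeries g z₀ (r/2).toNNReal with hp
  have h2 : (0:ℝ) < r/2 := by linarith
  have hp0 : HasFPowerSeriesOnBall g p z₀ (r/2).toNNReal := by
    refine (hg.mono (closedBall_subset_ball ?_)).hasFPowerSeriesOnBall ?_
    · rw [Real.coe_toNNReal _ h2.le]; linarith
    · simpa using h2
  have key : ∀ s : ℝ, 0 < s → s < r → HasFPowerSeriesOnBall g p z₀ s.toNNReal := by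
    intro s hs hsr
    have h1 : HasFPowerSeriesOnBall g (cauchyPowerSeries g z₀ s.toNNReal) z₀ s.toNNReal := by
      refine (hg.mono (closedBall_subset_ball ?_)).hasFPowerSeriesOnBall ?_
      · rw [Real.coe_toNNReal _ hs.le]; exact hsr
      · simpa using hs
    have heq := h1.hasFPowerSeriesAt.eq_formalMultilinearSeries hp0.hasFPowerSeriesAt
    rw [← heq]; exact h1
  have hrad : ∀ s : ℝ, 0 ≤ s → s < r → (s.toNNReal : ℝ≥0∞) ≤ p.radius := by
    intro s hs hsr
    rcases eq_or_lt_of_le hs with h | h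
    · simp [← h]
    · exact (key s h hsr).r_le
  refine ⟨fun y => ∑' n : ℕ, ((n:ℂ)+1)⁻¹ * p.coeff n * (y - z₀)^(n+1), fun z hz => ?_⟩
  set δ := ‖z - z₀‖ with hδ
  have hδ0 : 0 ≤ δ := norm_nonneg _
  have hδr : δ < r := by rwa [mem_ball, dist_eq_norm] at hz
  set s₁ : ℝ := (δ + r)/2 with hs₁
  have hs₁0 : 0 < s₁ := by positivity
  have hδs₁ : δ < s₁ := by simp only [hs₁]; linarith
  have hs₁r : s₁ < r := by simp only [hs₁]; linarith
  -- summability of coefficients at radius s₁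
  have hs₁rad : (s₁.toNNReal : ℝ≥0∞) < p.radius := by
    refine lt_of_lt_of_le ?_ (hrad ((s₁+r)/2) (by positivity) (by linarith))
    rw [ENNReal.coe_lt_coe, ← NNReal.coe_lt_coe, Real.coe_toNNReal _ hs₁0.le,
      Real.coe_toNNReal _ (by positivity : (0:ℝ) ≤ (s₁+r)/2)]
    linarith
  have hsum : Summable fun n => ‖p n‖ * s₁ ^ n := by
    have := p.summable_norm_mul_pow hs₁rad
    simpa [Real.coe_toNNReal _ hs₁0.le] using this
  have hsumu : Summable fun n => ‖p.coeff n‖ * s₁ ^ n := by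
    refine Summable.of_nonneg_of_le (fun n => by positivity) (fun n => ?_) hsum
    refine mul_le_mul_of_nonneg_right ?_ (by positivity)
    have h1 : ‖p n 1‖ ≤ ‖p n‖ * ∏ _i : Fin n, ‖(1:ℂ)‖ := (p n).le_opNorm 1
    simpa using h1
  have hball : Metric.eball z₀ (s₁.toNNReal : ℝ≥0∞) = ball z₀ s₁ := by
    rw [Metric.emetric_ball_nnreal, Real.coe_toNNReal _ hs₁0.le]
  have hmem : ∀ y ∈ ball z₀ s₁, HasSum (fun n => p.coeff n * (y - z₀)^n) (g y) := by
    intro y hy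
    have := (key s₁ hs₁0 hs₁r).hasSum_sub (by rwa [hball])
    refine this.congr_fun fun n => ?_
    rw [FormalMultilinearSeries.apply_eq_pow_smul_coeff, smul_eq_mul, mul_comm]
  have hder : HasDerivAt (fun y => ∑' n : ℕ, ((n:ℂ)+1)⁻¹ * p.coeff n * (y - z₀)^(n+1))
      (∑' n : ℕ, p.coeff n * (z - z₀)^n) z := by
    refine hasDerivAt_tsum_of_isPreconnected (g := fun (n : ℕ) (y : ℂ) => ((n:ℂ)+1)⁻¹ * p.coeff n * (y - z₀)^(n+1)) (g' := fun (n : ℕ) (y : ℂ) => p.coeff n * (y - z₀)^n) hsumu isOpen_ball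
      (convex_ball z₀ s₁).isPreconnected (fun n y hy => ?_) (fun n y hy => ?_)
      (mem_ball_self hs₁0) ?_ (by rwa [mem_ball, dist_eq_norm])
    · have h1 : HasDerivAt (fun y : ℂ => (y - z₀)^(n+1))
          ((↑(n+1) : ℂ) * (y - z₀)^n * 1) y := by
        have := ((hasDerivAt_id y).sub_const z₀).pow (n+1)
        simpa [Pi.pow_def] using this
      have := h1.const_mul (((n:ℂ)+1)⁻¹ * p.coeff n)
      refine this.congr_deriv (Eq.symm ?_)
      have hne : ((n:ℂ)+1) ≠ 0 := Nat.cast_add_one_ne_zero n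
      push_cast
      field_simp
    · rw [norm_mul, norm_pow]
      refine mul_le_mul_of_nonneg_left (pow_le_pow_left₀ (norm_nonneg _) ?_ n) (norm_nonneg _)
      rw [mem_ball, dist_eq_norm] at hy; exact hy.le
    · refine Summable.congr summable_zero fun n => ?_
      simp
  have := hmem z (by rwa [mem_ball, dist_eq_norm])
  rwa [this.tsum_eq] at hder

theorem harmonic_on_disc_has_holomorphic_completion
    (c : ℝ × ℝ) (r : ℝ) (hr : 0 < r)
    (B : Set (ℝ × ℝ)) (hB : B = {p : ℝ × ℝ | (p.1 - c.1) ^ 2 + (p.2 - c.2) ^ 2 < r ^ 2})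
    (u : ℝ × ℝ → ℝ)
    (hu : ContDiffOn ℝ 2 u B)
    (hharm : ∀ p ∈ B,
      deriv (deriv (fun x : ℝ => u (x, p.2))) p.1 +
        deriv (deriv (fun y : ℝ => u (p.1, y))) p.2 = 0) :
    ∃ f : ℂ → ℂ,
      (∀ p ∈ B, DifferentiableAt ℂ f (p.1 + p.2 * Complex.I)) ∧
      ∀ p ∈ B, (f (p.1 + p.2 * Complex.I)).re = u p := by
  set z₀ : ℂ := c.1 + c.2 * Complex.I with hz₀
  have hBopen : IsOpen B := by
    rw [hB]
    exact isOpen_lt (by fun_prop) continuous_const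
  have hmemiff : ∀ p : ℝ × ℝ, p ∈ B ↔ ((p.1 : ℂ) + p.2 * I) ∈ ball z₀ r := by
    intro p
    rw [hB, mem_ball, Complex.dist_eq, Complex.norm_def, Real.sqrt_lt' hr]
    simp only [Set.mem_setOf_eq, Complex.normSq_apply, hz₀]
    constructor <;> intro h <;> · simp only [Complex.add_re, Complex.add_im, Complex.ofReal_re,
        Complex.ofReal_im, Complex.mul_re, Complex.mul_im, Complex.I_re, Complex.I_im,
        Complex.sub_re, Complex.sub_im] at *; nlinarith
  have hconv : Convex ℝ B := by
    have : B = (Complex.equivRealProdCLM.symm : ℝ × ℝ →L[ℝ] ℂ) ⁻¹' (ball z₀ r) := by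
      ext p
      rw [Set.mem_preimage, ContinuousLinearEquiv.coe_coe, Complex.equivRealProdCLM_symm_apply]
      exact hmemiff p
    rw [this]
    exact (convex_ball z₀ r).linear_preimage
      ((Complex.equivRealProdCLM.symm : ℝ × ℝ →L[ℝ] ℂ) : ℝ × ℝ →ₗ[ℝ] ℂ)
  have hBmem : ∀ z : ℂ, z ∈ ball z₀ r → (z.re, z.im) ∈ B := by
    intro z hz
    rw [hmemiff]
    simpa [Complex.re_add_im] using hz
  -- derivative machinery
  set P : ℝ × ℝ → (ℝ × ℝ →L[ℝ] ℝ) := fderiv ℝ u with hPdef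
  have hdiff : ∀ p ∈ B, HasFDerivAt u (P p) p := by
    intro p hp
    exact ((hu.differentiableOn (by norm_num)).differentiableAt
      (hBopen.mem_nhds hp)).hasFDerivAt
  have hP1 : ContDiffOn ℝ 1 P B := hu.fderiv_of_isOpen hBopen (by norm_num)
  have hPdiff : ∀ p ∈ B, HasFDerivAt P (fderiv ℝ P p) p := by
    intro p hp
    exact ((hP1.differentiableOn (by norm_num)).differentiableAt
      (hBopen.mem_nhds hp)).hasFDerivAt
  have hsymm : ∀ p ∈ B, fderiv ℝ P p (1, 0) (0, 1) = fderiv ℝ P p (0, 1) (1, 0) := by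
    intro p hp
    exact second_derivative_symmetric_of_eventually
      (Filter.eventually_of_mem (hBopen.mem_nhds hp) (fun q hq => hdiff q hq))
      (hPdiff p hp) _ _
  have hxx : ∀ p ∈ B, deriv (deriv (fun x : ℝ => u (x, p.2))) p.1
      = fderiv ℝ P p (1, 0) (1, 0) := by
    intro p hp
    have hev : ∀ᶠ x in nhds p.1, (x, p.2) ∈ B := by
      have hc : Continuous fun x : ℝ => (x, p.2) := by fun_prop
      have : (p.1, p.2) ∈ B := by rwa [Prod.mk.eta]
      exact hc.continuousAt.eventually_mem (hBopen.mem_nhds this)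
    have hx1 : ∀ᶠ x in nhds p.1, deriv (fun x' : ℝ => u (x', p.2)) x = P (x, p.2) (1, 0) := by
      filter_upwards [hev] with x hx
      have hcurve : HasDerivAt (fun x' : ℝ => ((x' : ℝ), p.2)) ((1:ℝ), (0:ℝ)) x :=
        (hasDerivAt_id x).prodMk (hasDerivAt_const x p.2)
      exact ((hdiff _ hx).comp_hasDerivAt x hcurve).deriv
    rw [Filter.EventuallyEq.deriv_eq hx1]
    have hcurve : HasDerivAt (fun x' : ℝ => ((x' : ℝ), p.2)) ((1:ℝ), (0:ℝ)) p.1 :=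
      (hasDerivAt_id p.1).prodMk (hasDerivAt_const p.1 p.2)
    have h2 : HasDerivAt (fun x : ℝ => P (x, p.2)) (fderiv ℝ P p (1, 0)) p.1 := by
      have h := (hPdiff p hp).comp_hasDerivAt p.1 hcurve
      exact h
    have h3 := (ContinuousLinearMap.apply ℝ ℝ ((1:ℝ), (0:ℝ))).hasFDerivAt.comp_hasDerivAt p.1 h2
    exact h3.deriv
  have hyy : ∀ p ∈ B, deriv (deriv (fun y : ℝ => u (p.1, y))) p.2
      = fderiv ℝ P p (0, 1) (0, 1) := by
    intro p hp
    have hev : ∀ᶠ y in nhds p.2, (p.1, y) ∈ B := by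
      have hc : Continuous fun y : ℝ => (p.1, y) := by fun_prop
      have : (p.1, p.2) ∈ B := by rwa [Prod.mk.eta]
      exact hc.continuousAt.eventually_mem (hBopen.mem_nhds this)
    have hx1 : ∀ᶠ y in nhds p.2, deriv (fun y' : ℝ => u (p.1, y')) y = P (p.1, y) (0, 1) := by
      filter_upwards [hev] with y hy
      have hcurve : HasDerivAt (fun y' : ℝ => (p.1, (y' : ℝ))) ((0:ℝ), (1:ℝ)) y :=
        (hasDerivAt_const y p.1).prodMk (hasDerivAt_id y)
      exact ((hdiff _ hy).comp_hasDerivAt y hcurve).deriv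
    rw [Filter.EventuallyEq.deriv_eq hx1]
    have hcurve : HasDerivAt (fun y' : ℝ => (p.1, (y' : ℝ))) ((0:ℝ), (1:ℝ)) p.2 :=
      (hasDerivAt_const p.2 p.1).prodMk (hasDerivAt_id p.2)
    have h2 : HasDerivAt (fun y : ℝ => P (p.1, y)) (fderiv ℝ P p (0, 1)) p.2 := by
      have h := (hPdiff p hp).comp_hasDerivAt p.2 hcurve
      exact h
    have h3 := (ContinuousLinearMap.apply ℝ ℝ ((0:ℝ), (1:ℝ))).hasFDerivAt.comp_hasDerivAt p.2 h2
    exact h3.deriv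
  have hlap : ∀ p ∈ B, fderiv ℝ P p (1, 0) (1, 0) + fderiv ℝ P p (0, 1) (0, 1) = 0 := by
    intro p hp
    rw [← hxx p hp, ← hyy p hp]
    exact hharm p hp
  -- the function g = u_x - i u_y is holomorphic on the disc
  set g : ℂ → ℂ := fun z => ((P (z.re, z.im) (1, 0) : ℝ) : ℂ)
      - ((P (z.re, z.im) (0, 1) : ℝ) : ℂ) * I with hgdef
  have hg : DifferentiableOn ℂ g (ball z₀ r) := by
    intro z hz
    have hpz : (z.re, z.im) ∈ B := hBmem z hz
    set Q : ℝ × ℝ →L[ℝ] ℝ × ℝ →L[ℝ] ℝ := fderiv ℝ P (z.re, z.im) with hQdef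
    set w : ℂ := ((Q (1, 0) (1, 0) : ℝ) : ℂ) - ((Q (1, 0) (0, 1) : ℝ) : ℂ) * I with hwdef
    have hre : HasFDerivAt (fun z : ℂ => (z.re, z.im)) (Complex.reCLM.prod Complex.imCLM) z :=
      Complex.reCLM.hasFDerivAt.prodMk Complex.imCLM.hasFDerivAt
    have h1 : HasFDerivAt (fun z : ℂ => P (z.re, z.im))
        (Q.comp (Complex.reCLM.prod Complex.imCLM)) z :=
      (hPdiff _ hpz).comp z hre
    have h2 := (ContinuousLinearMap.apply ℝ ℝ ((1:ℝ), (0:ℝ))).hasFDerivAt.comp z h1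
    have h3 := Complex.ofRealCLM.hasFDerivAt.comp z h2
    have k2 := (ContinuousLinearMap.apply ℝ ℝ ((0:ℝ), (1:ℝ))).hasFDerivAt.comp z h1
    have k3 := Complex.ofRealCLM.hasFDerivAt.comp z k2
    have hgR := h3.sub (k3.mul_const I)
    have hgC : HasFDerivAt g (((1 : ℂ →L[ℂ] ℂ).smulRight w).restrictScalars ℝ) z := by
      refine hgR.congr_fderiv (Eq.symm ?_)
      have hq21 : Q (0, 1) (1, 0) = Q (1, 0) (0, 1) := (hsymm _ hpz).symm
      have hq22 : Q (0, 1) (0, 1) = -(Q (1, 0) (1, 0)) := by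
        have := hlap _ hpz
        linarith
      apply clm_ext_cplx <;>
      · simp only [ContinuousLinearMap.coe_restrictScalars', ContinuousLinearMap.coe_comp',
          Function.comp_apply, ContinuousLinearMap.coe_sub', Pi.sub_apply,
          ContinuousLinearMap.smulRight_apply, ContinuousLinearMap.one_apply,
          ContinuousLinearMap.apply_apply, ContinuousLinearMap.prod_apply,
          Complex.ofRealCLM_apply, Complex.reCLM_apply, Complex.imCLM_apply,
          Complex.one_re, Complex.one_im, Complex.I_re, Complex.I_im, smul_eq_mul,
          one_smul, ContinuousLinearMap.smul_apply]
        simp only [hq21, hq22, hwdef]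
        apply Complex.ext <;> simp <;> ring
    exact (hasFDerivAt_of_restrictScalars' hgC).differentiableAt.differentiableWithinAt
  -- primitive of g
  obtain ⟨F, hF⟩ := exists_primitive hr hg
  have hRe : ∀ p ∈ B, HasFDerivAt (fun q : ℝ × ℝ => (F ((q.1 : ℂ) + q.2 * I)).re) (P p) p := by
    intro p hp
    have h1 : HasFDerivAt (fun q : ℝ × ℝ => ((q.1 : ℂ)))
        (Complex.ofRealCLM.comp (ContinuousLinearMap.fst ℝ ℝ ℝ)) p :=
      (Complex.ofRealCLM.comp (ContinuousLinearMap.fst ℝ ℝ ℝ)).hasFDerivAt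
    have h2 : HasFDerivAt (fun q : ℝ × ℝ => ((q.2 : ℂ)))
        (Complex.ofRealCLM.comp (ContinuousLinearMap.snd ℝ ℝ ℝ)) p :=
      (Complex.ofRealCLM.comp (ContinuousLinearMap.snd ℝ ℝ ℝ)).hasFDerivAt
    have hι := h1.add (h2.mul_const I)
    have hFz := (hF _ ((hmemiff p).1 hp)).hasFDerivAt
    have hcomp := (hFz.restrictScalars ℝ).comp p hι
    have hre := Complex.reCLM.hasFDerivAt.comp p hcomp
    refine hre.congr_fderiv (Eq.symm ?_)
    apply clm_ext_prod <;>
    · simp [hgdef, Complex.ext_iff]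
  have hcB : c ∈ B := by
    rw [hB]
    simp only [Set.mem_setOf_eq, sub_self]
    norm_num
    positivity
  have hdOn : DifferentiableOn ℝ (fun q : ℝ × ℝ => (F ((q.1 : ℂ) + q.2 * I)).re - u q) B := by
    intro q hq
    exact ((hRe q hq).sub (hdiff q hq)).differentiableAt.differentiableWithinAt
  have hconst : ∀ p ∈ B, (F ((p.1 : ℂ) + p.2 * I)).re - u p
      = (F ((c.1 : ℂ) + c.2 * I)).re - u c := by
    intro p hp
    apply hconv.is_const_of_fderivWithin_eq_zero hdOn ?_ hp hcB
    intro x hx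
    rw [fderivWithin_of_isOpen hBopen hx]
    have h0 := (hRe x hx).sub (hdiff x hx)
    erw [h0.fderiv]
    simp
  refine ⟨fun z => F z - (((F z₀).re - u c : ℝ) : ℂ), ?_, ?_⟩
  · intro p hp
    exact (hF _ ((hmemiff p).1 hp)).differentiableAt.sub_const _
  · intro p hp
    have h1 := hconst p hp
    simp only [Complex.sub_re, Complex.ofReal_re]
    rw [hz₀]
    linarith
end
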